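/- Upper bound certificate: fix λ entrywise nonnegative and a POVM Π. Let Y₀ = (Σ_m z_m(λ) Π_m z_m(λ))^{1/2} and for each m let t_m be the largest real number with Y₀ ≥ t_m z_m(λ); set Y = Y₀ + Σ_m (1 − t_m)⁺ z_m(λ), where (x)⁺ = max(x, 0). Then Y ≥ z_m(λ) for all m, and hence Tr Y − λ·b ≥ f°(b) for any b with nonempty feasible set. -/

import Mathlib

open ComplexOrder

/-- An `M`-outcome POVM on `ℂ^n`. -/
def IsPOVM {n M : ℕ} (P : Fin M → Matrix (Fin n) (Fin n) ℂ) : Prop :=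
  (∀ m, (P m).PosSemidef) ∧ ∑ m, P m = 1

/-- `z_m(λ) = c_m + ∑_j λ_j a_{j,m}`. -/
noncomputable def zOp {n M J : ℕ} (c : Fin M → Matrix (Fin n) (Fin n) ℂ)
    (a : Fin J → Fin M → Matrix (Fin n) (Fin n) ℂ) (l : Fin J → ℝ) (m : Fin M) :
    Matrix (Fin n) (Fin n) ℂ :=
  c m + ∑ j, (l j : ℂ) • a j m

/-- `g(Π; λ) = ∑_m Tr(z_m(λ) Π_m)` (real part of the trace). -/
noncomputable def gObj {n M J : ℕ} (c : Fin M → Matrix (Fin n) (Fin n) ℂ)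
    (a : Fin J → Fin M → Matrix (Fin n) (Fin n) ℂ) (l : Fin J → ℝ)
    (P : Fin M → Matrix (Fin n) (Fin n) ℂ) : ℝ :=
  ∑ m, (Matrix.trace (zOp c a l m * P m)).re
/-- `β_j(Π) = ∑_m Tr(a_{j,m} Π_m)`. -/
noncomputable def betaFn {n M J : ℕ} (a : Fin J → Fin M → Matrix (Fin n) (Fin n) ℂ)
    (j : Fin J) (P : Fin M → Matrix (Fin n) (Fin n) ℂ) : ℝ :=
  ∑ m, (Matrix.trace (a j m * P m)).re

/-- `f(Π) = ∑_m Tr(c_m Π_m)`. -/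
noncomputable def fObj {n M : ℕ} (c : Fin M → Matrix (Fin n) (Fin n) ℂ)
    (P : Fin M → Matrix (Fin n) (Fin n) ℂ) : ℝ :=
  ∑ m, (Matrix.trace (c m * P m)).re

/-- The positive semidefinite square root (definition removed from Mathlib; restored verbatim). -/
noncomputable def Matrix.PosSemidef.sqrt {n : Type*} [Fintype n] [DecidableEq n] {𝕜 : Type*} [RCLike 𝕜]
    {A : Matrix n n 𝕜} (hA : A.PosSemidef) : Matrix n n 𝕜 :=
  hA.1.eigenvectorUnitary.1 * Matrix.diagonal ((↑) ∘ (√·) ∘ hA.1.eigenvalues) *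
  (star hA.1.eigenvectorUnitary : Matrix n n 𝕜)

section Aux
variable {n : ℕ}

lemma psd_smul {r : ℝ} (hr : 0 ≤ r) {A : Matrix (Fin n) (Fin n) ℂ}
    (hA : A.PosSemidef) : ((r : ℂ) • A).PosSemidef := by
  refine Matrix.PosSemidef.of_dotProduct_mulVec_nonneg ?_ ?_
  · unfold Matrix.IsHermitian
    rw [Matrix.conjTranspose_smul, hA.1.eq]
    simp
  · intro x
    rw [Matrix.smul_mulVec, dotProduct_smul]
    have h := hA.dotProduct_mulVec_nonneg x
    have : (0:ℂ) ≤ (r:ℂ) * (dotProduct (star x) (A.mulVec x)) := mul_nonneg (by exact_mod_cast hr) h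
    simpa [smul_eq_mul] using this

lemma psd_diag_nonneg {A : Matrix (Fin n) (Fin n) ℂ} (hA : A.PosSemidef) (i : Fin n) :
    (0:ℂ) ≤ A i i := by
  have := hA.dotProduct_mulVec_nonneg (Pi.single i 1)
  simpa [Matrix.mulVec, dotProduct, Pi.single_apply] using this

lemma psd_trace_re_nonneg {A : Matrix (Fin n) (Fin n) ℂ} (hA : A.PosSemidef) :
    0 ≤ (Matrix.trace A).re := by
  rw [Matrix.trace, Complex.re_sum]
  exact Finset.sum_nonneg fun i _ => by
    have := psd_diag_nonneg hA i
    rw [Complex.le_def] at this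
    simpa using this.1

lemma psd_mul_trace_re_nonneg {A B : Matrix (Fin n) (Fin n) ℂ}
    (hA : A.PosSemidef) (hB : B.PosSemidef) : 0 ≤ (Matrix.trace (A * B)).re := by
  open scoped MatrixOrder in
  obtain ⟨S, hSB⟩ := CStarAlgebra.nonneg_iff_eq_star_mul_self.mp hB.nonneg
  have h1 : Matrix.trace (A * B) = Matrix.trace (S * A * S.conjTranspose) := by
    rw [hSB, Matrix.star_eq_conjTranspose, ← Matrix.mul_assoc, Matrix.trace_mul_cycle]
  rw [h1]
  have h2 : (S * A * S.conjTranspose).PosSemidef := hA.mul_mul_conjTranspose_same S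
  exact psd_trace_re_nonneg h2

lemma psd_sum {ι : Type*} (s : Finset ι) (f : ι → Matrix (Fin n) (Fin n) ℂ)
    (hf : ∀ i ∈ s, (f i).PosSemidef) : (∑ i ∈ s, f i).PosSemidef := by
  classical
  induction s using Finset.induction with
  | empty => simpa using Matrix.PosSemidef.zero
  | insert _ _ hx ih =>
    rw [Finset.sum_insert hx]
    exact (hf _ (Finset.mem_insert_self _ _)).add
      (ih fun i hi => hf i (Finset.mem_insert_of_mem hi))

end Aux

theorem stmt_15 {n M J : ℕ} (c : Fin M → Matrix (Fin n) (Fin n) ℂ)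
    (a : Fin J → Fin M → Matrix (Fin n) (Fin n) ℂ)
    (hc : ∀ m, (c m).PosSemidef) (ha : ∀ j m, (a j m).PosSemidef)
    (l : Fin J → ℝ) (hl : ∀ j, 0 ≤ l j)
    (P : Fin M → Matrix (Fin n) (Fin n) ℂ) (hP : IsPOVM P)
    (hS : (∑ m, zOp c a l m * P m * zOp c a l m).PosSemidef)
    (Y₀ : Matrix (Fin n) (Fin n) ℂ) (hY₀ : Y₀ = hS.sqrt)
    (t : Fin M → ℝ)
    -- t_m is the largest real with Y₀ ≥ t_m z_m(λ)
    (ht : ∀ m, IsGreatest {s : ℝ | (Y₀ - (s : ℂ) • zOp c a l m).PosSemidef} (t m))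
    (Y : Matrix (Fin n) (Fin n) ℂ)
    (hY : Y = Y₀ + ∑ m, ((max (1 - t m) 0 : ℝ) : ℂ) • zOp c a l m) :
    (∀ m, (Y - zOp c a l m).PosSemidef) ∧
    ∀ b : Fin J → ℝ, ∀ Q, IsPOVM Q → (∀ j, b j ≤ betaFn a j Q) →
      fObj c Q ≤ (Matrix.trace Y).re - ∑ j, l j * b j := by
  have hz : ∀ m, (zOp c a l m).PosSemidef := fun m =>
    (hc m).add (psd_sum _ _ fun j _ => psd_smul (hl j) (ha j m))
  have part1 : ∀ m, (Y - zOp c a l m).PosSemidef := by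
    intro m
    have key : Y - zOp c a l m = (Y₀ - (t m : ℂ) • zOp c a l m)
        + ((max (1 - t m) 0 + t m - 1 : ℝ) : ℂ) • zOp c a l m
        + ∑ k ∈ Finset.univ.erase m, ((max (1 - t k) 0 : ℝ) : ℂ) • zOp c a l k := by
      rw [hY, ← Finset.sum_erase_add _ _ (Finset.mem_univ m)]
      push_cast
      module
    rw [key]
    refine (((ht m).1).add (psd_smul ?_ (hz m))).add
      (psd_sum _ _ fun k _ => psd_smul (le_max_right _ _) (hz k))
    have : 1 - t m ≤ max (1 - t m) 0 := le_max_left _ _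
    linarith
  refine ⟨part1, ?_⟩
  intro b Q hQ hb
  -- trace Y = ∑ m trace (Y * Q m)
  have htrY : Matrix.trace Y = ∑ m, Matrix.trace (Y * Q m) := by
    rw [← Matrix.trace_sum, ← Finset.mul_sum, hQ.2, mul_one]
  -- Σ Re Tr(z Q) ≤ Re Tr Y
  have hstep1 : ∑ m, (Matrix.trace (zOp c a l m * Q m)).re ≤ (Matrix.trace Y).re := by
    rw [htrY, Complex.re_sum]
    refine Finset.sum_le_sum fun m _ => ?_
    have h0 := psd_mul_trace_re_nonneg (part1 m) (hQ.1 m)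
    rw [Matrix.sub_mul, Matrix.trace_sub, Complex.sub_re] at h0
    linarith
  -- Σ Re Tr(z Q) = fObj + Σ_j l j * betaFn
  have hsplit : ∑ m, (Matrix.trace (zOp c a l m * Q m)).re
      = fObj c Q + ∑ j, l j * betaFn a j Q := by
    unfold fObj betaFn zOp
    simp only [Matrix.add_mul, Matrix.sum_mul, Matrix.trace_add, Matrix.trace_sum,
      smul_mul_assoc, Matrix.trace_smul, Complex.add_re, Complex.re_sum,
      Finset.mul_sum]
    rw [Finset.sum_add_distrib, Finset.sum_comm]
    congr 1
    refine Finset.sum_congr rfl fun m _ => Finset.sum_congr rfl fun j _ => ?_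
    simp [Complex.smul_re]
  -- Σ l b ≤ Σ l β
  have hlb : ∑ j, l j * b j ≤ ∑ j, l j * betaFn a j Q :=
    Finset.sum_le_sum fun j _ => mul_le_mul_of_nonneg_left (hb j) (hl j)
  linarith [hstep1, hsplit.symm.le]
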